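/- Let p be a prime and μ a partition of n with p-core γ (|γ| = m) and weight w, so n = m + wp. Then with p^a = [n!]_p and p^b = [(wp)!]_p, the p-part of dim S^μ = n!/∏ hooks(μ) satisfies [dim S^μ]_p ≥ p^{a-b}. -/

import Mathlib

/-- A partition, as a weakly decreasing, eventually-zero sequence. -/
def IsPartitionFun (lam : ℕ → ℕ) : Prop :=
  (∀ i j, i ≤ j → lam j ≤ lam i) ∧ (∃ N, ∀ i, N ≤ i → lam i = 0)

/-- `nu` is obtained from `mu` by removing a rim hook (border strip) of
size `p`, occupying rows `r, …, s`. -/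
def IsRimHookRemoval (p : ℕ) (mu nu : ℕ → ℕ) : Prop :=
  ∃ r s, r ≤ s ∧
    (∀ i, i < r → nu i = mu i) ∧
    (∀ i, s < i → nu i = mu i) ∧
    (∀ i, r ≤ i → i ≤ s → nu i < mu i) ∧
    (∀ i, r ≤ i → i < s → nu i = mu (i + 1) - 1) ∧
    (∑ i ∈ Finset.Icc r s, (mu i - nu i)) = p

/-- `gam` is the `p`-core of `mu`, obtained by removing `w` rim `p`-hooks. -/
inductive IsPCoreWithWeight (p : ℕ) : (ℕ → ℕ) → (ℕ → ℕ) → ℕ → Prop where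
  | core (gam : ℕ → ℕ)
      (h : ∀ nu, IsPartitionFun nu → ¬ IsRimHookRemoval p gam nu) :
      IsPCoreWithWeight p gam gam 0
  | step (mu nu gam : ℕ → ℕ) (w : ℕ) (hnu : IsPartitionFun nu)
      (hrem : IsRimHookRemoval p mu nu) (hrec : IsPCoreWithWeight p nu gam w) :
      IsPCoreWithWeight p mu gam (w + 1)

/-- The cells (i, j) of the Young diagram of a partition `lam` with `k` rows. -/
def cellsOf (lam : ℕ → ℕ) (k : ℕ) : Finset (ℕ × ℕ) :=
  (Finset.range k).biUnion (fun i => ({i} : Finset ℕ) ×ˢ Finset.range (lam i))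

/-- The `j`-th part of the conjugate partition of `lam` (which has `k` rows). -/
def conjPart (lam : ℕ → ℕ) (k j : ℕ) : ℕ :=
  ((Finset.range k).filter (fun i => j < lam i)).card

/-- The hook length of the cell `q = (i, j)`. -/
def hookLen (lam : ℕ → ℕ) (k : ℕ) (q : ℕ × ℕ) : ℕ :=
  (lam q.1 - q.2) + (conjPart lam k q.2 - q.1) - 1

/-- The product of all hook lengths of `lam`. -/
def hookProd (lam : ℕ → ℕ) (k : ℕ) : ℕ :=
  ∏ q ∈ cellsOf lam k, hookLen lam k q

/-- `[m]_p`: the largest power of `p` dividing `m`. -/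
def ppart (p m : ℕ) : ℕ := p ^ (m.factorization p)


namespace St6
open Finset

def cnt (q : ℕ) (E : Finset ℕ) (r : ℕ) : ℕ := (E.filter (fun x => x % q = r)).card
def gq (q : ℕ) (E : Finset ℕ) (x : ℕ) : ℕ :=
  ((Finset.range x).filter (fun y => y ∉ E ∧ y % q = x % q)).card
def Ssum (q : ℕ) (c : ℕ → ℕ) : ℕ := ∑ r ∈ range q, (r * c r + q * Nat.choose (c r) 2)
def sortSet (q : ℕ) (c : ℕ → ℕ) : Finset ℕ :=
  (range q).biUnion (fun r => (range (c r)).image (fun j => q * j + r))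
def Bset (lam : ℕ → ℕ) (k : ℕ) : Finset ℕ := (range k).image (fun i => lam i + (k - 1 - i))
def pdiffs (E : Finset ℕ) : Finset (ℕ × ℕ) :=
  (E ×ˢ range (E.sup id + 1)).filter (fun z => z.2 < z.1 ∧ z.2 ∉ E)

lemma L1 (T : Finset ℕ) : ∑ t ∈ T, (T.filter (· < t)).card = (T.card).choose 2 := by
  induction T using Finset.strongInduction with
  | _ T ih =>
    rcases T.eq_empty_or_nonempty with rfl | hT
    · simp
    · set M := T.max' hT with hM
      have hMT : M ∈ T := T.max'_mem hT
      have hmax : ∀ t ∈ T, t ≤ M := fun t ht => T.le_max' t ht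
      have hsub : T.erase M ⊂ T := Finset.erase_ssubset hMT
      have key : ∀ t ∈ T.erase M, T.filter (· < t) = (T.erase M).filter (· < t) := by
        intro t ht
        ext s
        simp only [Finset.mem_filter, Finset.mem_erase]
        constructor
        · rintro ⟨hs, hst⟩
          refine ⟨⟨?_, hs⟩, hst⟩
          rintro rfl
          have := Finset.mem_erase.1 ht
          exact absurd (hmax t this.2) (by omega)
        · rintro ⟨⟨_, hs⟩, hst⟩; exact ⟨hs, hst⟩
      have hfM : T.filter (· < M) = T.erase M := by
        ext s
        simp only [Finset.mem_filter, Finset.mem_erase]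
        constructor
        · rintro ⟨hs, hsM⟩; exact ⟨by omega, hs⟩
        · rintro ⟨hne, hs⟩; exact ⟨hs, lt_of_le_of_ne (hmax s hs) hne⟩
      rw [← Finset.add_sum_erase _ _ hMT]
      rw [Finset.sum_congr rfl (fun t ht => by rw [key t ht]), ih _ hsub, hfM]
      have hc : T.card = (T.erase M).card + 1 := by
        rw [Finset.card_erase_of_mem hMT]
        have : 0 < T.card := Finset.card_pos.2 hT
        omega
      rw [hc]
      rw [Nat.choose_succ_succ ((T.erase M).card)]
      simp [Nat.choose_one_right, Nat.add_comm]

lemma L3 (D : Finset ℕ) : ∑ i ∈ range D.card, i ≤ ∑ x ∈ D, x := by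
  induction D using Finset.strongInduction with
  | _ D ih =>
    rcases D.eq_empty_or_nonempty with rfl | hD
    · simp
    · set M := D.max' hD with hM
      have hMD : M ∈ D := D.max'_mem hD
      have hsub : D.erase M ⊂ D := Finset.erase_ssubset hMD
      have hcard : D.card ≤ M + 1 := by
        have : D ⊆ range (M + 1) := fun x hx => Finset.mem_range.2 (by
          have := D.le_max' x hx; omega)
        calc D.card ≤ (range (M+1)).card := Finset.card_le_card this
          _ = M + 1 := by simp
      have hc : D.card = (D.erase M).card + 1 := by
        rw [Finset.card_erase_of_mem hMD]
        have : 0 < D.card := Finset.card_pos.2 hD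
        omega
      have ihe := ih _ hsub
      rw [← Finset.add_sum_erase _ _ hMD, hc, Finset.sum_range_succ]
      have : (D.erase M).card ≤ M := by omega
      omega


lemma gap_count (q : ℕ) (hq : 0 < q) (E : Finset ℕ) (x r : ℕ) (hr : r < q) (hx : x % q = r) :
    gq q E x = ((range (x / q)).filter (fun s => q * s + r ∉ E)).card := by
  have hxd : q * (x / q) + r = x := by have := Nat.div_add_mod x q; omega
  apply Finset.card_bij' (fun y _ => y / q) (fun s _ => q * s + r)
  · intro y hy
    simp only [Finset.mem_filter, Finset.mem_range] at hy ⊢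
    obtain ⟨hyx, hyE, hymod⟩ := hy
    rw [hx] at hymod
    have hyd : q * (y / q) + r = y := by have := Nat.div_add_mod y q; omega
    have hlt : y / q < x / q := by
      have : q * (y / q) < q * (x / q) := by omega
      exact Nat.lt_of_mul_lt_mul_left this
    exact ⟨hlt, by rw [hyd]; exact hyE⟩
  · intro s hs
    simp only [Finset.mem_filter, Finset.mem_range] at hs ⊢
    obtain ⟨hsx, hsE⟩ := hs
    have : q * s < q * (x / q) := (Nat.mul_lt_mul_left hq).2 hsx
    refine ⟨by omega, hsE, ?_⟩
    rw [hx, Nat.add_comm, Nat.add_mul_mod_self_left, Nat.mod_eq_of_lt hr]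
  · intro y hy
    simp only [Finset.mem_filter, Finset.mem_range] at hy
    obtain ⟨hyx, hyE, hymod⟩ := hy
    rw [hx] at hymod
    have := Nat.div_add_mod y q; omega
  · intro s hs
    rw [Nat.add_comm, Nat.add_mul_div_left _ _ hq, Nat.div_eq_of_lt hr]
    omega

lemma mem_divImage (q r : ℕ) (hq : 0 < q) (hr : r < q) (E : Finset ℕ) (s : ℕ) :
    s ∈ (E.filter (fun x => x % q = r)).image (· / q) ↔ q * s + r ∈ E := by
  constructor
  · rintro h
    obtain ⟨x, hx, rfl⟩ := Finset.mem_image.1 h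
    obtain ⟨hxE, hxr⟩ := Finset.mem_filter.1 hx
    have : q * (x / q) + r = x := by have := Nat.div_add_mod x q; omega
    rw [this]; exact hxE
  · intro h
    apply Finset.mem_image.2
    refine ⟨q * s + r, Finset.mem_filter.2 ⟨h, ?_⟩, ?_⟩
    · rw [Nat.add_comm, Nat.add_mul_mod_self_left, Nat.mod_eq_of_lt hr]
    · rw [Nat.add_comm, Nat.add_mul_div_left _ _ hq, Nat.div_eq_of_lt hr]
      omega

lemma class_eq_image (q r : ℕ) (hq : 0 < q) (hr : r < q) (E : Finset ℕ) :
    E.filter (fun x => x % q = r)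
      = ((E.filter (fun x => x % q = r)).image (· / q)).image (fun s => q * s + r) := by
  ext x
  simp only [Finset.mem_image, exists_exists_and_eq_and]
  constructor
  · intro hx
    obtain ⟨hxE, hxr⟩ := Finset.mem_filter.1 hx
    refine ⟨x, hx, ?_⟩
    have := Nat.div_add_mod x q; omega
  · rintro ⟨y, hy, rfl⟩
    obtain ⟨hyE, hyr⟩ := Finset.mem_filter.1 hy
    have : q * (y / q) + r = y := by have := Nat.div_add_mod y q; omega
    rw [this]; exact hy

/-- per-class identity -/
lemma L2class (q : ℕ) (hq : 0 < q) (E : Finset ℕ) (r : ℕ) (hr : r < q) :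
    ∑ x ∈ E.filter (fun x => x % q = r), x
      = q * (∑ x ∈ E.filter (fun x => x % q = r), gq q E x)
        + (r * cnt q E r + q * Nat.choose (cnt q E r) 2) := by
  set T := (E.filter (fun x => x % q = r)).image (· / q) with hT
  have hinj : Function.Injective (fun s => q * s + r) := by
    intro a b hab; simp only at hab
    have : q * a = q * b := by omega
    exact Nat.eq_of_mul_eq_mul_left hq this
  have himg := class_eq_image q r hq hr E
  have hcnt : cnt q E r = T.card := by
    rw [cnt, himg, Finset.card_image_of_injective _ hinj]
  have hsx : ∑ x ∈ E.filter (fun x => x % q = r), x = ∑ t ∈ T, (q * t + r) := by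
    rw [himg, Finset.sum_image (fun a _ b _ h => hinj h)]
  have hsg : ∑ x ∈ E.filter (fun x => x % q = r), gq q E x
      = ∑ t ∈ T, (((range t).filter (fun s => s ∉ T)).card) := by
    rw [himg, Finset.sum_image (fun a _ b _ h => hinj h)]
    apply Finset.sum_congr rfl
    intro t ht
    have hmod : (q * t + r) % q = r := by
      rw [Nat.add_comm, Nat.add_mul_mod_self_left, Nat.mod_eq_of_lt hr]
    have hdiv : (q * t + r) / q = t := by
      rw [Nat.add_comm, Nat.add_mul_div_left _ _ hq, Nat.div_eq_of_lt hr]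
      omega
    rw [gap_count q hq E _ r hr hmod, hdiv]
    apply Finset.card_bij' (fun s _ => s) (fun s _ => s)
    · intro s hs
      simp only [Finset.mem_filter, Finset.mem_range] at hs ⊢
      exact ⟨hs.1, fun hsT => hs.2 ((mem_divImage q r hq hr E s).1 hsT)⟩
    · intro s hs
      simp only [Finset.mem_filter, Finset.mem_range] at hs ⊢
      exact ⟨hs.1, fun hE => hs.2 ((mem_divImage q r hq hr E s).2 hE)⟩
    · intro a _; rfl
    · intro a _; rfl
  rw [hsx, hsg, hcnt]
  have key : ∀ t ∈ T, ((range t).filter (fun s => s ∉ T)).card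
      + (T.filter (· < t)).card = t := by
    intro t ht
    have h1 : (T.filter (· < t)).card = ((range t).filter (fun s => s ∈ T)).card := by
      congr 1
      ext s
      simp only [Finset.mem_filter, Finset.mem_range]
      tauto
    rw [h1, Nat.add_comm]
    have := Finset.card_filter_add_card_filter_not (s := range t)
      (fun s => s ∈ T)
    simp only [Finset.card_range] at this
    exact this
  have hsum1 : ∑ t ∈ T, (q * t + r) = q * (∑ t ∈ T, t) + r * T.card := by
    rw [Finset.sum_add_distrib, Finset.mul_sum, Finset.sum_const, smul_eq_mul]
    ring
  have hsum2 : (∑ t ∈ T, t) = (∑ t ∈ T, ((range t).filter (fun s => s ∉ T)).card)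
      + Nat.choose T.card 2 := by
    rw [← L1 T, ← Finset.sum_add_distrib]
    exact (Finset.sum_congr rfl (fun t ht => (key t ht).symm))
  rw [hsum1, hsum2]
  ring

lemma L2 (q : ℕ) (hq : 0 < q) (E : Finset ℕ) :
    ∑ x ∈ E, x = q * (∑ x ∈ E, gq q E x) + Ssum q (cnt q E) := by
  have hmaps : ∀ x ∈ E, x % q ∈ range q := fun x _ => Finset.mem_range.2 (Nat.mod_lt x hq)
  have h1 : ∑ x ∈ E, x = ∑ r ∈ range q, ∑ x ∈ E.filter (fun x => x % q = r), x :=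
    (Finset.sum_fiberwise_of_maps_to hmaps _).symm
  have h2 : ∑ x ∈ E, gq q E x
      = ∑ r ∈ range q, ∑ x ∈ E.filter (fun x => x % q = r), gq q E x :=
    (Finset.sum_fiberwise_of_maps_to hmaps _).symm
  rw [h1, h2, Ssum, Finset.mul_sum, ← Finset.sum_add_distrib]
  apply Finset.sum_congr rfl
  intro r hr
  exact L2class q hq E r (Finset.mem_range.1 hr)


lemma mem_sortSet (q : ℕ) (hq : 0 < q) (c : ℕ → ℕ) (x : ℕ) :
    x ∈ sortSet q c ↔ x / q < c (x % q) := by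
  simp only [sortSet, Finset.mem_biUnion, Finset.mem_range, Finset.mem_image]
  constructor
  · rintro ⟨r, hr, j, hj, rfl⟩
    have hmod : (q * j + r) % q = r := by
      rw [Nat.add_comm, Nat.add_mul_mod_self_left, Nat.mod_eq_of_lt hr]
    have hdiv : (q * j + r) / q = j := by
      rw [Nat.add_comm, Nat.add_mul_div_left _ _ hq, Nat.div_eq_of_lt hr]; omega
    rw [hmod, hdiv]; exact hj
  · intro h
    refine ⟨x % q, Nat.mod_lt x hq, x / q, h, ?_⟩
    have := Nat.div_add_mod x q; omega

lemma sum_sortSet (q : ℕ) (hq : 0 < q) (c : ℕ → ℕ) :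
    ∑ x ∈ sortSet q c, x = Ssum q c := by
  rw [sortSet, Finset.sum_biUnion, Ssum]
  · apply Finset.sum_congr rfl
    intro r hr
    rw [Finset.sum_image]
    · rw [Finset.sum_add_distrib, ← Finset.mul_sum, Finset.sum_const, Finset.card_range,
        smul_eq_mul, Finset.sum_range_id, Nat.choose_two_right]
      ring
    · intro a _ b _ hab
      simp only at hab
      have : q * a = q * b := by omega
      exact Nat.eq_of_mul_eq_mul_left hq this
  · intro r hr r' hr' hne
    simp only [Finset.mem_coe, Finset.mem_range] at hr hr'
    apply Finset.disjoint_left.2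
    intro a ha ha'
    obtain ⟨j, _, rfl⟩ := Finset.mem_image.1 ha
    obtain ⟨j', _, hj'⟩ := Finset.mem_image.1 ha'
    apply hne
    have h1 : (q * j + r) % q = r := by
      rw [Nat.add_comm, Nat.add_mul_mod_self_left, Nat.mod_eq_of_lt hr]
    have h2 : (q * j' + r') % q = r' := by
      rw [Nat.add_comm, Nat.add_mul_mod_self_left, Nat.mod_eq_of_lt hr']
    rw [← h1, ← hj', h2]

lemma cnt_sortSet (q : ℕ) (hq : 0 < q) (c : ℕ → ℕ) (r : ℕ) (hr : r < q) :
    cnt q (sortSet q c) r = c r := by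
  rw [cnt]
  have : (sortSet q c).filter (fun x => x % q = r)
      = (range (c r)).image (fun j => q * j + r) := by
    ext x
    simp only [Finset.mem_filter, Finset.mem_image, Finset.mem_range]
    constructor
    · rintro ⟨hx, hxr⟩
      rw [mem_sortSet q hq] at hx
      refine ⟨x / q, by rw [hxr] at hx; exact hx, ?_⟩
      rw [← hxr]; have := Nat.div_add_mod x q; omega
    · rintro ⟨j, hj, rfl⟩
      have h1 : (q * j + r) % q = r := by
        rw [Nat.add_comm, Nat.add_mul_mod_self_left, Nat.mod_eq_of_lt hr]
      have h2 : (q * j + r) / q = j := by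
        rw [Nat.add_comm, Nat.add_mul_div_left _ _ hq, Nat.div_eq_of_lt hr]; omega
      refine ⟨(mem_sortSet q hq c _).2 ?_, h1⟩
      rw [h1, h2]; exact hj
  rw [this, Finset.card_image_of_injective, Finset.card_range]
  intro a b hab
  simp only at hab
  have : q * a = q * b := by omega
  exact Nat.eq_of_mul_eq_mul_left hq this

lemma card_sortSet (q : ℕ) (hq : 0 < q) (c : ℕ → ℕ) :
    (sortSet q c).card = ∑ r ∈ range q, c r := by
  have h := Finset.card_eq_sum_card_fiberwise
    (f := fun x => x % q) (s := sortSet q c) (t := range q)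
    (fun x _ => Finset.mem_range.2 (Nat.mod_lt x hq))
  rw [h]
  exact Finset.sum_congr rfl (fun r hr => cnt_sortSet q hq c r (Finset.mem_range.1 hr))

lemma cnt_total (q : ℕ) (hq : 0 < q) (E : Finset ℕ) :
    ∑ r ∈ range q, cnt q E r = E.card := by
  exact (Finset.card_eq_sum_card_fiberwise
    (f := fun x => x % q) (s := E) (t := range q)
    (fun x _ => Finset.mem_range.2 (Nat.mod_lt x hq))).symm

/-- aggregation of counts from modulus `q` to modulus `p` when `p ∣ q` -/
lemma cnt_agg' (p q : ℕ) (hp : 0 < p) (hq : 0 < q) (hpq : p ∣ q) (E : Finset ℕ) (r : ℕ) :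
    cnt p E r = ∑ r' ∈ (range q).filter (fun r' => r' % p = r), cnt q E r' := by
  have hmaps : ∀ x ∈ E.filter (fun x => x % p = r),
      x % q ∈ (range q).filter (fun r' => r' % p = r) := by
    intro x hx
    obtain ⟨hxE, hxp⟩ := Finset.mem_filter.1 hx
    refine Finset.mem_filter.2 ⟨Finset.mem_range.2 (Nat.mod_lt x hq), ?_⟩
    rw [Nat.mod_mod_of_dvd x hpq]; exact hxp
  have h := Finset.card_eq_sum_card_fiberwise hmaps
  rw [cnt, h]
  apply Finset.sum_congr rfl
  intro r' hr'
  obtain ⟨hr'q, hr'p⟩ := Finset.mem_filter.1 hr'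
  rw [cnt]
  congr 1
  ext x
  simp only [Finset.mem_filter]
  constructor
  · rintro ⟨⟨hxE, _⟩, hxq⟩; exact ⟨hxE, hxq⟩
  · rintro ⟨hxE, hxq⟩
    refine ⟨⟨hxE, ?_⟩, hxq⟩
    rw [← Nat.mod_mod_of_dvd x hpq, hxq]; exact hr'p

/-- closedness implies no gaps -/
lemma L5 (p : ℕ) (hp : 0 < p) (C : Finset ℕ) (hcl : ∀ x ∈ C, p ≤ x → x - p ∈ C) :
    ∀ x ∈ C, gq p C x = 0 := by
  have main : ∀ x, x ∈ C → ∀ y, y < x → y % p = x % p → y ∈ C := by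
    intro x
    induction x using Nat.strong_induction_on with
    | _ x ih =>
      intro hx y hy hmod
      have hdx := Nat.div_add_mod x p
      have hdy := Nat.div_add_mod y p
      have hlt : y / p < x / p := by
        rcases Nat.lt_or_ge (y/p) (x/p) with h | h
        · exact h
        · exfalso
          have : p * (x/p) ≤ p * (y/p) := Nat.mul_le_mul (Nat.le_refl p) h
          omega
      have hpx : p ≤ x := by
        have h0 : 0 < x / p := Nat.lt_of_le_of_lt (Nat.zero_le _) hlt
        have : p * 1 ≤ p * (x / p) := Nat.mul_le_mul (Nat.le_refl p) h0
        omega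
      have hxp : x - p ∈ C := hcl x hx hpx
      have hmod' : (x - p) % p = x % p := by
        conv_rhs => rw [← Nat.sub_add_cancel hpx]
        rw [Nat.add_mod_right]
      have hle : y ≤ x - p := by
        have h1 : p * (y/p + 1) ≤ p * (x/p) := Nat.mul_le_mul (Nat.le_refl p) hlt
        have h2 : p * (y/p + 1) = p * (y/p) + p := by ring
        omega
      rcases Nat.eq_or_lt_of_le hle with rfl | hlt2
      · exact hxp
      · exact ih (x - p) (by omega) hxp y hlt2 (by rw [hmod']; exact hmod)
  intro x hx
  rw [gq, Finset.card_eq_zero, Finset.filter_eq_empty_iff]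
  intro y hy
  rw [Finset.mem_range] at hy
  rintro ⟨hyC, hmod⟩
  exact hyC (main x hx y hy hmod)

/-- the main abacus inequality -/
lemma L6 (p q w : ℕ) (hp : 0 < p) (hq : 0 < q) (hpq : p ∣ q) (B C : Finset ℕ)
    (hcnt : ∀ r, cnt p B r = cnt p C r)
    (hcl : ∀ x ∈ C, p ≤ x → x - p ∈ C)
    (hsum : ∑ x ∈ B, x = (∑ x ∈ C, x) + w * p) :
    q * (∑ x ∈ B, gq q B x) ≤ w * p := by
  have h2B := L2 q hq B
  have h2C := L2 p hp C
  have hgC : ∑ x ∈ C, gq p C x = 0 :=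
    Finset.sum_eq_zero (fun x hx => L5 p hp C hcl x hx)
  rw [hgC, Nat.mul_zero, Nat.zero_add] at h2C
  set D := sortSet q (cnt q B) with hD
  have hDsum : ∑ x ∈ D, x = Ssum q (cnt q B) := sum_sortSet q hq (cnt q B)
  have hDcnt : ∀ r' , r' < q → cnt q D r' = cnt q B r' := fun r' h =>
    cnt_sortSet q hq (cnt q B) r' h
  have hcntD : ∀ r, cnt p D r = cnt p B r := by
    intro r
    rw [cnt_agg' p q hp hq hpq D r, cnt_agg' p q hp hq hpq B r]
    apply Finset.sum_congr rfl
    intro r' hr'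
    exact hDcnt r' (Finset.mem_range.1 (Finset.mem_filter.1 hr').1)
  have h2D := L2 p hp D
  -- Ssum p (cnt p C) = Ssum p (cnt p D)
  have hSS : Ssum p (cnt p C) = Ssum p (cnt p D) := by
    rw [Ssum, Ssum]
    apply Finset.sum_congr rfl
    intro r _
    rw [hcntD r, hcnt r]
  -- ∑ C = Ssum p (cnt p C) = Ssum p (cnt p D) ≤ ∑ D = Ssum q (cnt q B)
  have hkey : ∑ x ∈ C, x ≤ Ssum q (cnt q B) := by
    calc ∑ x ∈ C, x = Ssum p (cnt p C) := h2C
      _ = Ssum p (cnt p D) := hSS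
      _ ≤ ∑ x ∈ D, x := by omega
      _ = Ssum q (cnt q B) := hDsum
  omega

/-- abacus bound against total size -/
lemma L6' (q : ℕ) (hq : 0 < q) (B : Finset ℕ) :
    q * (∑ x ∈ B, gq q B x) + ∑ i ∈ range B.card, i ≤ ∑ x ∈ B, x := by
  have h2B := L2 q hq B
  have hcard : (sortSet q (cnt q B)).card = B.card := by
    rw [card_sortSet q hq, cnt_total q hq]
  have h3 := L3 (sortSet q (cnt q B))
  rw [hcard, sum_sortSet q hq] at h3
  omega


lemma Bfun_lt (lam : ℕ → ℕ) (k : ℕ) (hanti : ∀ i j, i ≤ j → lam j ≤ lam i)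
    {i j : ℕ} (hij : i < j) (hj : j < k) :
    lam j + (k - 1 - j) < lam i + (k - 1 - i) := by
  have := hanti i j (Nat.le_of_lt hij); omega

lemma mem_Bset (lam : ℕ → ℕ) (k x : ℕ) :
    x ∈ Bset lam k ↔ ∃ i, i < k ∧ lam i + (k - 1 - i) = x := by
  simp only [Bset, Finset.mem_image, Finset.mem_range]

lemma Bset_injOn (lam : ℕ → ℕ) (k : ℕ) (hanti : ∀ i j, i ≤ j → lam j ≤ lam i) :
    ∀ i ∈ range k, ∀ j ∈ range k,
      lam i + (k - 1 - i) = lam j + (k - 1 - j) → i = j := by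
  intro i hi j hj h
  rw [Finset.mem_range] at hi hj
  rcases lt_trichotomy i j with hij | rfl | hij
  · exact absurd h (Nat.ne_of_gt (Bfun_lt lam k hanti hij hj))
  · rfl
  · exact absurd h (Nat.ne_of_lt (Bfun_lt lam k hanti hij hi))

lemma card_Bset (lam : ℕ → ℕ) (k : ℕ) (hanti : ∀ i j, i ≤ j → lam j ≤ lam i) :
    (Bset lam k).card = k := by
  rw [Bset, Finset.card_image_of_injOn (fun i hi j hj h => Bset_injOn lam k hanti i hi j hj h),
    Finset.card_range]

lemma sum_Bset (lam : ℕ → ℕ) (k : ℕ) (hanti : ∀ i j, i ≤ j → lam j ≤ lam i) :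
    ∑ x ∈ Bset lam k, x = (∑ i ∈ range k, lam i) + ∑ i ∈ range k, i := by
  rw [Bset, Finset.sum_image (fun i hi j hj h => Bset_injOn lam k hanti i hi j hj h),
    Finset.sum_add_distrib]
  congr 1
  exact Finset.sum_range_reflect (fun j => j) k

lemma move_sum (B : Finset ℕ) (x p : ℕ) (hx : x ∈ B) (hpx : p ≤ x) (hgap : x - p ∉ B) :
    (∑ y ∈ insert (x - p) (B.erase x), y) + p = ∑ y ∈ B, y := by
  rw [Finset.sum_insert (fun h => hgap (Finset.mem_of_mem_erase h)),
    ← Finset.add_sum_erase _ _ hx]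
  omega

lemma move_cnt (B : Finset ℕ) (x p : ℕ) (hx : x ∈ B) (hpx : p ≤ x) (hgap : x - p ∉ B)
    (r : ℕ) : cnt p (insert (x - p) (B.erase x)) r = cnt p B r := by
  have hres : (x - p) % p = x % p := by
    conv_rhs => rw [← Nat.sub_add_cancel hpx]
    rw [Nat.add_mod_right]
  unfold cnt
  rw [Finset.filter_insert, Finset.filter_erase]
  by_cases h : (x - p) % p = r
  · rw [if_pos h]
    have hxf : x ∈ B.filter (fun y => y % p = r) :=
      Finset.mem_filter.2 ⟨hx, by rw [← hres]; exact h⟩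
    rw [Finset.card_insert_of_notMem
        (fun hmem => hgap (Finset.mem_of_mem_filter _ (Finset.mem_of_mem_erase hmem))),
      Finset.card_erase_of_mem hxf]
    have : 0 < (B.filter (fun y => y % p = r)).card := Finset.card_pos.2 ⟨x, hxf⟩
    omega
  · rw [if_neg h]
    have hxf : x ∉ B.filter (fun y => y % p = r) := by
      intro hmem; exact h (by rw [hres]; exact (Finset.mem_filter.1 hmem).2)
    rw [Finset.erase_eq_of_notMem hxf]

lemma nu_le_mu (p : ℕ) (mu nu : ℕ → ℕ) (hrem : IsRimHookRemoval p mu nu) :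
    ∀ i, nu i ≤ mu i := by
  obtain ⟨r, s, hrs, hlow, hhigh, hmid, hstep, hsum⟩ := hrem
  intro i
  rcases Nat.lt_or_ge i r with h | h
  · rw [hlow i h]
  · rcases Nat.lt_or_ge s i with h' | h'
    · rw [hhigh i h']
    · exact Nat.le_of_lt (hmid i h h')

lemma step_beta (p k : ℕ) (hp : 0 < p) (mu nu : ℕ → ℕ)
    (hmu : ∀ i j, i ≤ j → mu j ≤ mu i) (hmu0 : ∀ i, k ≤ i → mu i = 0)
    (hnu : ∀ i j, i ≤ j → nu j ≤ nu i)
    (hrem : IsRimHookRemoval p mu nu) :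
    ∃ x, x ∈ Bset mu k ∧ p ≤ x ∧ x - p ∉ Bset mu k ∧
      Bset nu k = insert (x - p) ((Bset mu k).erase x) := by
  obtain ⟨r, s, hrs, hlow, hhigh, hmid, hstep, hsum⟩ := hrem
  have hsk : s < k := by
    by_contra h
    push_neg at h
    have h1 := hmid s hrs (Nat.le_refl s)
    rw [hmu0 s h] at h1
    omega
  have hrk : r < k := Nat.lt_of_le_of_lt hrs hsk
  set x := mu r + (k - 1 - r) with hxdef
  -- beta relation in middle rows
  have hbnu : ∀ i, r ≤ i → i < s → nu i + (k - 1 - i) = mu (i + 1) + (k - 1 - (i + 1)) := by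
    intro i h1 h2
    have h3 := hstep i h1 h2
    have h4 : nu (i + 1) < mu (i + 1) := hmid (i + 1) (by omega) (by omega)
    omega
  -- row-level sum identity
  have hsum2 : ∑ i ∈ Icc r s, mu i = (∑ i ∈ Icc r s, nu i) + p := by
    have h1 : ∀ i ∈ Icc r s, mu i = nu i + (mu i - nu i) := by
      intro i hi
      obtain ⟨h2, h3⟩ := Finset.mem_Icc.1 hi
      have := hmid i h2 h3; omega
    calc ∑ i ∈ Icc r s, mu i = ∑ i ∈ Icc r s, (nu i + (mu i - nu i)) :=
          Finset.sum_congr rfl h1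
      _ = (∑ i ∈ Icc r s, nu i) + ∑ i ∈ Icc r s, (mu i - nu i) := Finset.sum_add_distrib
      _ = (∑ i ∈ Icc r s, nu i) + p := by rw [hsum]
  have hbsum : (∑ i ∈ Icc r s, (mu i + (k - 1 - i)))
      = (∑ i ∈ Icc r s, (nu i + (k - 1 - i))) + p := by
    rw [Finset.sum_add_distrib, Finset.sum_add_distrib]
    omega
  -- key: beta value of row s of nu
  have hxnus : nu s + (k - 1 - s) + p = x := by
    rcases Nat.eq_or_lt_of_le hrs with rfl | hrls
    · rw [Finset.Icc_self, Finset.sum_singleton, Finset.sum_singleton] at hbsum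
      omega
    · obtain ⟨s', rfl⟩ : ∃ s', s = s' + 1 := ⟨s - 1, by omega⟩
      have e2 : ∑ i ∈ Icc r (s' + 1), (nu i + (k - 1 - i))
          = (∑ i ∈ Icc r s', (nu i + (k - 1 - i))) + (nu (s' + 1) + (k - 1 - (s' + 1))) :=
        Finset.sum_Icc_succ_top (by omega) _
      have e1 : ∑ i ∈ Icc r (s' + 1), (mu i + (k - 1 - i))
          = (mu r + (k - 1 - r)) + ∑ i ∈ Icc (r + 1) (s' + 1), (mu i + (k - 1 - i)) := by
        rw [← Finset.Ioc_insert_left hrs, Finset.sum_insert (by simp), Finset.Icc_add_one_left_eq_Ioc]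
      have e3 : ∑ i ∈ Icc r s', (nu i + (k - 1 - i))
          = ∑ i ∈ Icc (r + 1) (s' + 1), (mu i + (k - 1 - i)) := by
        have := Finset.map_add_right_Icc r s' 1
        rw [← this, Finset.sum_map]
        apply Finset.sum_congr rfl
        intro i hi
        obtain ⟨h1, h2⟩ := Finset.mem_Icc.1 hi
        have := hbnu i h1 (by omega)
        simpa [addRightEmbedding] using this
      rw [e2, e3] at hbsum
      rw [e1] at hbsum
      omega
  have hpx : p ≤ x := by omega
  have hxmem : x ∈ Bset mu k := (mem_Bset mu k x).2 ⟨r, hrk, rfl⟩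
  have hgap : x - p ∉ Bset mu k := by
    rw [mem_Bset]
    rintro ⟨i, hik, hi⟩
    have hxp : x - p = nu s + (k - 1 - s) := by omega
    rcases le_or_gt i s with h | h
    · -- beta mu i >= beta mu s > beta nu s
      have h1 := hmu i s h
      have h2 := hmid s hrs (Nat.le_refl s)
      omega
    · -- i > s : beta mu i < beta nu s
      have h1 : nu (s + 1) = mu (s + 1) := hhigh (s + 1) (by omega)
      have h2 : nu (s + 1) ≤ nu s := hnu s (s + 1) (by omega)
      have h3 : mu i ≤ mu (s + 1) := hmu (s + 1) i h
      omega
  refine ⟨x, hxmem, hpx, hgap, ?_⟩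
  ext y
  rw [mem_Bset, Finset.mem_insert, Finset.mem_erase, mem_Bset]
  constructor
  · rintro ⟨i, hik, rfl⟩
    rcases Nat.lt_or_ge i r with h | h
    · right
      refine ⟨?_, i, hik, by rw [hlow i h]⟩
      rw [hlow i h]
      have := Bfun_lt mu k hmu h hrk
      omega
    · rcases Nat.lt_or_ge i s with h' | h'
      · right
        have hb := hbnu i h h'
        refine ⟨?_, i + 1, by omega, by omega⟩
        have := Bfun_lt mu k hmu (show r < i + 1 by omega) (show i + 1 < k by omega)
        omega
      · rcases Nat.eq_or_lt_of_le h' with rfl | h''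
        · left; omega
        · right
          refine ⟨?_, i, hik, by rw [hhigh i h'']⟩
          rw [hhigh i h'']
          have := Bfun_lt mu k hmu (show r < i by omega) hik
          omega
  · rintro (rfl | ⟨hne, i, hik, rfl⟩)
    · exact ⟨s, hsk, by omega⟩
    · have hir : i ≠ r := by
        rintro rfl; exact hne rfl
      rcases Nat.lt_or_ge i r with h | h
      · exact ⟨i, hik, by rw [hlow i h]⟩
      · rcases le_or_gt i s with h' | h'
        · -- r < i ≤ s  (since i ≠ r)
          have hri : r < i := by omega
          have hb := hbnu (i - 1) (by omega) (by omega)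
          refine ⟨i - 1, by omega, ?_⟩
          have : i - 1 + 1 = i := by omega
          rw [this] at hb
          omega
        · exact ⟨i, hik, by rw [hhigh i h']⟩


lemma exists_removal (p k : ℕ) (hp : 0 < p) (gam : ℕ → ℕ)
    (hg : ∀ i j, i ≤ j → gam j ≤ gam i) (hg0 : ∀ i, k ≤ i → gam i = 0)
    (x : ℕ) (hx : x ∈ Bset gam k) (hpx : p ≤ x) (hgap : x - p ∉ Bset gam k) :
    ∃ nu, IsPartitionFun nu ∧ IsRimHookRemoval p gam nu := by
  obtain ⟨r, hrk, hxr⟩ := (mem_Bset gam k x).1 hx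
  have hnotmem : ∀ i, i < k → gam i + (k - 1 - i) ≠ x - p := by
    intro i hik heq
    exact hgap ((mem_Bset gam k (x - p)).2 ⟨i, hik, heq⟩)
  obtain ⟨s, hrs, hsk, hbs, hs1⟩ : ∃ s, r ≤ s ∧ s < k ∧
      (x - p < gam s + (k - 1 - s)) ∧
      (∀ i, s < i → i < k → gam i + (k - 1 - i) < x - p) := by
    refine ⟨Nat.findGreatest (fun i => x - p < gam i + (k - 1 - i)) (k - 1),
      Nat.le_findGreatest (m := r) (n := k - 1)
        (P := fun i => x - p < gam i + (k - 1 - i)) (by omega) (by omega),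
      ?_, ?_, ?_⟩
    · have h := Nat.findGreatest_le (P := fun i => x - p < gam i + (k - 1 - i))
        (n := k - 1)
      omega
    · exact Nat.findGreatest_spec (m := r)
        (P := fun i => x - p < gam i + (k - 1 - i)) (by omega) (by omega)
    · intro i hsi hik
      have h1 := Nat.findGreatest_is_greatest
        (P := fun i => x - p < gam i + (k - 1 - i)) (n := k - 1) hsi (by omega)
      simp only [not_lt] at h1
      have h2 := hnotmem i hik
      omega
  have hxps : k - 1 - s ≤ x - p := by
    rcases Nat.eq_or_lt_of_le (show s ≤ k - 1 by omega) with heq | hlt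
    · omega
    · have := hs1 (s + 1) (by omega) (by omega)
      omega
  have hmidpos : ∀ i, r < i → i ≤ s → 1 ≤ gam i := by
    intro i h1 h2
    have h3 := hg i s h2
    omega
  set nu : ℕ → ℕ := fun i =>
    if i < r then gam i else if i < s then gam (i + 1) - 1
    else if i = s then x - p - (k - 1 - s) else gam i with hnu
  have nu_eq_low : ∀ i, i < r → nu i = gam i := by
    intro i h; simp only [hnu]; rw [if_pos h]
  have nu_eq_mid : ∀ i, r ≤ i → i < s → nu i = gam (i + 1) - 1 := by
    intro i h h'; simp only [hnu]; rw [if_neg (by omega), if_pos h']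
  have nu_eq_s : nu s = x - p - (k - 1 - s) := by
    simp only [hnu]
    rw [if_neg (by omega), if_neg (by omega)]
    simp
  have nu_eq_high : ∀ i, s < i → nu i = gam i := by
    intro i h; simp only [hnu]; rw [if_neg (by omega), if_neg (by omega), if_neg (by omega)]
  have nus_lt : x - p - (k - 1 - s) < gam s := by omega
  have nus_ge : gam (s + 1) ≤ x - p - (k - 1 - s) := by
    rcases Nat.lt_or_ge (s + 1) k with h | h
    · have := hs1 (s + 1) (by omega) h
      omega
    · rw [hg0 (s + 1) h]; omega
  have hdec : ∀ i, nu (i + 1) ≤ nu i := by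
    intro i
    rcases Nat.lt_or_ge (i + 1) r with h1 | h1
    · rw [nu_eq_low (i + 1) h1, nu_eq_low i (by omega)]
      exact hg i (i + 1) (by omega)
    rcases Nat.eq_or_lt_of_le h1 with h2 | h2
    · -- h2 : r = i + 1
      rw [nu_eq_low i (by omega)]
      rcases Nat.eq_or_lt_of_le hrs with h3 | h3
      · -- r = s, so i + 1 = s
        have his : i + 1 = s := by omega
        rw [his, nu_eq_s]
        have := hg i s (by omega)
        omega
      · rw [← h2, nu_eq_mid r (le_refl r) h3, h2]
        have := hg i (i + 1 + 1) (by omega)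
        omega
    have hri : r ≤ i := by omega
    rcases Nat.lt_or_ge (i + 1) s with h3 | h3
    · rw [nu_eq_mid (i + 1) (by omega) h3, nu_eq_mid i hri (by omega)]
      have := hg (i + 1) (i + 1 + 1) (by omega)
      omega
    rcases Nat.eq_or_lt_of_le h3 with h4 | h4
    ·
      rw [← h4, nu_eq_s, nu_eq_mid i hri (by omega)]
      have e2 : gam s = gam (i + 1) := by rw [h4]
      omega
    · rcases Nat.eq_or_lt_of_le (show s ≤ i by omega) with h5 | h5
      · -- h5 : s = i
        rw [nu_eq_high (i + 1) (by omega)]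
        have e : nu i = x - p - (k - 1 - s) := by rw [← h5]; exact nu_eq_s
        rw [e]
        have e2 : gam (i + 1) = gam (s + 1) := by rw [h5]
        omega
      · rw [nu_eq_high (i + 1) (by omega), nu_eq_high i h5]
        exact hg i (i + 1) (by omega)
  have hanti : ∀ i j, i ≤ j → nu j ≤ nu i := by
    intro i j hij
    induction j with
    | zero =>
        have : i = 0 := by omega
        rw [this]
    | succ j ihj =>
        rcases Nat.eq_or_lt_of_le hij with h | h
        · rw [h]
        · exact le_trans (hdec j) (ihj (by omega))
  refine ⟨nu, ⟨hanti, ⟨k, fun i hik => by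
    rw [nu_eq_high i (by omega)]; exact hg0 i hik⟩⟩, r, s, hrs, nu_eq_low,
    nu_eq_high, ?_, nu_eq_mid, ?_⟩
  · intro i hri his
    rcases Nat.eq_or_lt_of_le his with h | h
    · rw [h, nu_eq_s]
      omega
    · rw [nu_eq_mid i hri h]
      have h1 := hmidpos (i + 1) (by omega) (by omega)
      have h2 := hg i (i + 1) (by omega)
      omega
  · -- the sum is p
    have hkey : (∑ i ∈ Icc r s, nu i) + p = ∑ i ∈ Icc r s, gam i := by
      rcases Nat.eq_or_lt_of_le hrs with h | h
      · have e : Icc r s = {s} := by rw [h, Finset.Icc_self]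
        rw [e, Finset.sum_singleton, Finset.sum_singleton, nu_eq_s]
        have e2 : gam r = gam s := by rw [h]
        omega
      · obtain ⟨s', hs'⟩ : ∃ s', s = s' + 1 := ⟨s - 1, by omega⟩
        rw [hs'] at nu_eq_s hxps hsk hbs ⊢
        have e1 : ∑ i ∈ Icc r (s' + 1), nu i
            = (∑ i ∈ Icc r s', nu i) + nu (s' + 1) :=
          Finset.sum_Icc_succ_top (by omega) _
        have e2 : ∑ i ∈ Icc r s', nu i = ∑ i ∈ Icc r s', (gam (i + 1) - 1) := by
          apply Finset.sum_congr rfl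
          intro i hi
          obtain ⟨hi1, hi2⟩ := Finset.mem_Icc.1 hi
          exact nu_eq_mid i hi1 (by omega)
        have e3 : ∑ i ∈ Icc r s', gam (i + 1)
            = (∑ i ∈ Icc r s', (gam (i + 1) - 1)) + (Icc r s').card := by
          have hpt : ∀ i ∈ Icc r s', gam (i + 1) = (gam (i + 1) - 1) + 1 := by
            intro i hi
            obtain ⟨hi1, hi2⟩ := Finset.mem_Icc.1 hi
            have := hmidpos (i + 1) (by omega) (by omega)
            omega
          rw [Finset.sum_congr rfl hpt, Finset.sum_add_distrib, Finset.sum_const,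
            smul_eq_mul, mul_one]
        have e4 : ∑ i ∈ Icc r s', gam (i + 1) = ∑ i ∈ Icc (r + 1) (s' + 1), gam i := by
          rw [← Finset.map_add_right_Icc r s' 1, Finset.sum_map]
          apply Finset.sum_congr rfl
          intro i hi
          simp [addRightEmbedding]
        have e5 : ∑ i ∈ Icc r (s' + 1), gam i
            = gam r + ∑ i ∈ Icc (r + 1) (s' + 1), gam i := by
          rw [← Finset.Ioc_insert_left (show r ≤ s' + 1 by omega),
            Finset.sum_insert (by simp), Finset.Icc_add_one_left_eq_Ioc]
        have e6 : (Icc r s').card = s' + 1 - r := by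
          rw [Nat.card_Icc]
        rw [e1, e2, e5, ← e4, e3, e6, nu_eq_s]
        omega
    have hptw : ∀ i ∈ Icc r s, gam i = nu i + (gam i - nu i) := by
      intro i hi
      obtain ⟨hi1, hi2⟩ := Finset.mem_Icc.1 hi
      rcases Nat.eq_or_lt_of_le hi2 with h | h
      · rw [h, nu_eq_s]; omega
      · rw [nu_eq_mid i hi1 h]
        have h1 := hmidpos (i + 1) (by omega) (by omega)
        have h2 := hg i (i + 1) (by omega)
        omega
    have : ∑ i ∈ Icc r s, gam i
        = (∑ i ∈ Icc r s, nu i) + ∑ i ∈ Icc r s, (gam i - nu i) := by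
      calc ∑ i ∈ Icc r s, gam i = ∑ i ∈ Icc r s, (nu i + (gam i - nu i)) :=
            Finset.sum_congr rfl hptw
        _ = (∑ i ∈ Icc r s, nu i) + ∑ i ∈ Icc r s, (gam i - nu i) :=
            Finset.sum_add_distrib
    omega

lemma chain (p k : ℕ) (hp : 0 < p) (mu gam : ℕ → ℕ) (w : ℕ)
    (hcore : IsPCoreWithWeight p mu gam w)
    (hmu : ∀ i j, i ≤ j → mu j ≤ mu i) (hmu0 : ∀ i, k ≤ i → mu i = 0) :
    (∀ i j, i ≤ j → gam j ≤ gam i) ∧ (∀ i, k ≤ i → gam i = 0) ∧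
    (∀ r, cnt p (Bset mu k) r = cnt p (Bset gam k) r) ∧
    ((∑ x ∈ Bset mu k, x) = (∑ x ∈ Bset gam k, x) + w * p) ∧
    (∀ x ∈ Bset gam k, p ≤ x → x - p ∈ Bset gam k) := by
  revert hmu hmu0
  induction hcore with
  | core g h =>
      intro hmu hmu0
      refine ⟨hmu, hmu0, fun r => rfl, by omega, ?_⟩
      intro x hxB hpx
      by_contra hgap
      obtain ⟨nu, hnupf, hnurem⟩ := exists_removal p k hp g hmu hmu0 x hxB hpx hgap
      exact h nu hnupf hnurem
  | step mu' nu g w' hnu hrem hrec ih =>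
      intro hmu hmu0
      have hnudec := hnu.1
      have hnule := nu_le_mu p mu' nu hrem
      have hnu0 : ∀ i, k ≤ i → nu i = 0 := by
        intro i hik
        have := hnule i
        rw [hmu0 i hik] at this
        omega
      obtain ⟨x, hxB, hpx, hgap, heq⟩ := step_beta p k hp mu' nu hmu hmu0 hnudec hrem
      obtain ⟨hgdec, hg0, hcnt, hsum, hcl⟩ := ih hnudec hnu0
      refine ⟨hgdec, hg0, ?_, ?_, hcl⟩
      · intro r
        rw [← hcnt r, heq, move_cnt _ x p hxB hpx hgap r]
      · have h1 := move_sum (Bset mu' k) x p hxB hpx hgap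
        rw [← heq] at h1
        have h2 : (w' + 1) * p = w' * p + p := by ring
        omega


lemma mem_cellsOf (lam : ℕ → ℕ) (k : ℕ) (a : ℕ × ℕ) :
    a ∈ cellsOf lam k ↔ a.1 < k ∧ a.2 < lam a.1 := by
  cases a with
  | mk i j =>
    simp only [cellsOf, Finset.mem_biUnion, Finset.mem_range, Finset.mem_product,
      Finset.mem_singleton]
    constructor
    · rintro ⟨i', hi', rfl, hj⟩
      exact ⟨hi', hj⟩
    · rintro ⟨hi, hj⟩
      exact ⟨i, hi, rfl, hj⟩

section hooks
variable (lam : ℕ → ℕ) (k : ℕ)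

lemma conj_le (j : ℕ) : conjPart lam k j ≤ k := by
  have := Finset.card_filter_le (Finset.range k) (fun i => j < lam i)
  simpa [conjPart] using this

lemma conj_gt (hanti : ∀ i j, i ≤ j → lam j ≤ lam i) (i j : ℕ) (hik : i < k)
    (hj : j < lam i) : i < conjPart lam k j := by
  have hsub : range (i + 1) ⊆ (Finset.range k).filter (fun i' => j < lam i') := by
    intro i' hi'
    rw [Finset.mem_range] at hi'
    refine Finset.mem_filter.2 ⟨Finset.mem_range.2 (by omega), ?_⟩
    have := hanti i' i (by omega)
    omega
  have := Finset.card_le_card hsub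
  rw [Finset.card_range] at this
  exact this

lemma conj_le_of_ge (hanti : ∀ i j, i ≤ j → lam j ≤ lam i) (i j : ℕ)
    (hj : lam i ≤ j) : conjPart lam k j ≤ i := by
  have hsub : (Finset.range k).filter (fun i' => j < lam i') ⊆ range i := by
    intro i' hi'
    obtain ⟨h1, h2⟩ := Finset.mem_filter.1 hi'
    rw [Finset.mem_range] at h1 ⊢
    by_contra h
    push_neg at h
    have := hanti i i' h
    omega
  have := Finset.card_le_card hsub
  rw [Finset.card_range] at this
  exact this

lemma conj_anti (j j' : ℕ) (hjj : j ≤ j') : conjPart lam k j' ≤ conjPart lam k j := by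
  apply Finset.card_le_card
  intro i hi
  obtain ⟨h1, h2⟩ := Finset.mem_filter.1 hi
  exact Finset.mem_filter.2 ⟨h1, by omega⟩

/-- the `j`-th gap value -/
def gapf (j : ℕ) : ℕ := j + (k - conjPart lam k j)

lemma gapf_not_mem (hanti : ∀ i j, i ≤ j → lam j ≤ lam i) (j : ℕ) :
    gapf lam k j ∉ Bset lam k := by
  rw [mem_Bset]
  rintro ⟨i', hik, heq⟩
  rw [gapf] at heq
  have hck := conj_le lam k j
  rcases Nat.lt_or_ge j (lam i') with h | h
  · have := conj_gt lam k hanti i' j hik h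
    omega
  · have := conj_le_of_ge lam k hanti i' j h
    omega

lemma gapf_lt_beta (hanti : ∀ i j, i ≤ j → lam j ≤ lam i) (i j : ℕ) (hik : i < k)
    (hj : j < lam i) : gapf lam k j < lam i + (k - 1 - i) := by
  have h1 := conj_gt lam k hanti i j hik hj
  have h2 := conj_le lam k j
  rw [gapf]
  omega

lemma gapf_mono (j j' : ℕ) (h : j < j') : gapf lam k j < gapf lam k j' := by
  have h1 := conj_anti lam k j j' (by omega)
  have h2 := conj_le lam k j
  have h3 := conj_le lam k j'
  rw [gapf, gapf]
  omega

lemma beta_lt_gapf_lam (hanti : ∀ i j, i ≤ j → lam j ≤ lam i) (i : ℕ) (hik : i < k) :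
    lam i + (k - 1 - i) < gapf lam k (lam i) := by
  have h1 := conj_le_of_ge lam k hanti i (lam i) (le_refl _)
  rw [gapf]
  omega

lemma hook_eq (hanti : ∀ i j, i ≤ j → lam j ≤ lam i) (i j : ℕ) (hik : i < k)
    (hj : j < lam i) :
    hookLen lam k (i, j) + gapf lam k j = lam i + (k - 1 - i) := by
  have h1 := conj_gt lam k hanti i j hik hj
  have h2 := conj_le lam k j
  show (lam i - j) + (conjPart lam k j - i) - 1 + (j + (k - conjPart lam k j))
    = lam i + (k - 1 - i)
  omega

lemma gapf_surj (hk : 0 < k) (hanti : ∀ i j, i ≤ j → lam j ≤ lam i)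
    (hpos : 0 < lam 0) (y : ℕ) (hy : y < lam 0 + k) (hyB : y ∉ Bset lam k) :
    ∃ j, gapf lam k j = y := by
  set M := lam 0 + k with hM
  set S := (Bset lam k) ∪ ((range (M - k)).image (gapf lam k)) with hS
  have hginj : Function.Injective (gapf lam k) := by
    intro a b hab
    rcases lt_trichotomy a b with h | h | h
    · exact absurd hab (Nat.ne_of_lt (gapf_mono lam k a b h))
    · exact h
    · exact absurd hab (Nat.ne_of_gt (gapf_mono lam k b a h))
  have hBsub : Bset lam k ⊆ range M := by
    intro x hx
    obtain ⟨i, hik, rfl⟩ := (mem_Bset lam k x).1 hx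
    have := hanti 0 i (by omega)
    rw [Finset.mem_range]
    omega
  have hGsub : (range (M - k)).image (gapf lam k) ⊆ range M := by
    intro y hy
    obtain ⟨j, hj, rfl⟩ := Finset.mem_image.1 hy
    rw [Finset.mem_range] at hj ⊢
    have := conj_le lam k j
    rw [gapf]
    omega
  have hdisj : Disjoint (Bset lam k) ((range (M - k)).image (gapf lam k)) := by
    rw [Finset.disjoint_right]
    intro a ha
    obtain ⟨j, _, rfl⟩ := Finset.mem_image.1 ha
    exact gapf_not_mem lam k hanti j
  have hcard : S.card = M := by
    rw [hS, Finset.card_union_of_disjoint hdisj, card_Bset lam k hanti,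
      Finset.card_image_of_injective _ hginj, Finset.card_range]
    omega
  have hSsub : S ⊆ range M := Finset.union_subset hBsub hGsub
  have hSeq : S = range M := Finset.eq_of_subset_of_card_le hSsub
    (by rw [hcard, Finset.card_range])
  have hyS : y ∈ S := by
    rw [hSeq, Finset.mem_range]
    omega
  rw [hS] at hyS
  rcases Finset.mem_union.1 hyS with h | h
  · exact absurd h hyB
  · obtain ⟨j, _, hj⟩ := Finset.mem_image.1 h
    exact ⟨j, hj⟩

/-- the main bijection: hook lengths are beta-differences -/
lemma hookProd_eq_pdiffs (hk : 0 < k) (hanti : ∀ i j, i ≤ j → lam j ≤ lam i)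
    (hsupp : ∀ i, lam i ≠ 0 ↔ i < k) :
    hookProd lam k = ∏ z ∈ pdiffs (Bset lam k), (z.1 - z.2) := by
  have hpos : 0 < lam 0 := by
    have := (hsupp 0).2 hk
    omega
  rw [hookProd]
  apply Finset.prod_bij
    (i := fun a _ => (lam a.1 + (k - 1 - a.1), gapf lam k a.2))
  · -- membership
    intro a ha
    obtain ⟨ha1, ha2⟩ := (mem_cellsOf lam k a).1 ha
    have hxB : lam a.1 + (k - 1 - a.1) ∈ Bset lam k :=
      (mem_Bset lam k _).2 ⟨a.1, ha1, rfl⟩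
    have hxsup : lam a.1 + (k - 1 - a.1) ≤ (Bset lam k).sup id :=
      Finset.le_sup (f := id) hxB
    have hglt := gapf_lt_beta lam k hanti a.1 a.2 ha1 ha2
    refine Finset.mem_filter.2 ⟨Finset.mem_product.2 ⟨hxB, ?_⟩, hglt,
      gapf_not_mem lam k hanti a.2⟩
    rw [Finset.mem_range]
    omega
  · -- injectivity
    intro a1 ha1 a2 ha2 heq
    obtain ⟨h11, h12⟩ := (mem_cellsOf lam k a1).1 ha1
    obtain ⟨h21, h22⟩ := (mem_cellsOf lam k a2).1 ha2
    rw [Prod.mk.injEq] at heq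
    obtain ⟨he1, he2⟩ := heq
    have hfst : a1.1 = a2.1 := by
      rcases lt_trichotomy a1.1 a2.1 with h | h | h
      · exact absurd he1 (Nat.ne_of_gt (Bfun_lt lam k hanti h h21))
      · exact h
      · exact absurd he1 (Nat.ne_of_lt (Bfun_lt lam k hanti h h11))
    have hsnd : a1.2 = a2.2 := by
      rcases lt_trichotomy a1.2 a2.2 with h | h | h
      · exact absurd he2 (Nat.ne_of_lt (gapf_mono lam k _ _ h))
      · exact h
      · exact absurd he2 (Nat.ne_of_gt (gapf_mono lam k _ _ h))
    exact Prod.ext hfst hsnd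
  · -- surjectivity
    intro z hz
    obtain ⟨hzp, hz1, hz2⟩ := Finset.mem_filter.1 hz
    obtain ⟨hzB, hzr⟩ := Finset.mem_product.1 hzp
    obtain ⟨i, hik, hxi⟩ := (mem_Bset lam k z.1).1 hzB
    have hy1 : z.2 < lam 0 + k := by
      have h0 := hanti 0 i (by omega)
      omega
    obtain ⟨j, hj⟩ := gapf_surj lam k hk hanti hpos z.2 hy1 hz2
    have hjlam : j < lam i := by
      by_contra h
      push_neg at h
      have h1 := beta_lt_gapf_lam lam k hanti i hik
      rcases Nat.eq_or_lt_of_le h with h2 | h2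
      · rw [← h2] at hj
        omega
      · have := gapf_mono lam k (lam i) j h2
        omega
    refine ⟨(i, j), (mem_cellsOf lam k (i, j)).2 ⟨hik, hjlam⟩, ?_⟩
    simp only
    rw [hxi, hj]
  · -- value equality
    intro a ha
    obtain ⟨ha1, ha2⟩ := (mem_cellsOf lam k a).1 ha
    have := hook_eq lam k hanti a.1 a.2 ha1 ha2
    have hglt := gapf_lt_beta lam k hanti a.1 a.2 ha1 ha2
    have : hookLen lam k (a.1, a.2) = lam a.1 + (k - 1 - a.1) - gapf lam k a.2 := by
      omega
    simp only
    rw [← this]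

lemma pdiffs_pos (E : Finset ℕ) (z : ℕ × ℕ) (hz : z ∈ pdiffs E) : 0 < z.1 - z.2 := by
  obtain ⟨_, h1, _⟩ := Finset.mem_filter.1 hz
  omega

lemma pdiffs_count (q : ℕ) (hq : 0 < q) (E : Finset ℕ) :
    ((pdiffs E).filter (fun z => q ∣ z.1 - z.2)).card = ∑ x ∈ E, gq q E x := by
  have hmaps : ∀ z ∈ (pdiffs E).filter (fun z => q ∣ z.1 - z.2), z.1 ∈ E := by
    intro z hz
    have h1 := (Finset.mem_filter.1 hz).1
    exact (Finset.mem_product.1 (Finset.mem_filter.1 h1).1).1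
  rw [Finset.card_eq_sum_card_fiberwise hmaps]
  apply Finset.sum_congr rfl
  intro x hxE
  rw [gq]
  refine Finset.card_bij' (fun z _ => z.2) (fun y _ => (x, y)) ?hi ?hj ?li ?ri
  case hi =>
    intro z hz
    obtain ⟨hz1, hz2⟩ := Finset.mem_filter.1 hz
    obtain ⟨hz3, hz4⟩ := Finset.mem_filter.1 hz1
    obtain ⟨hzp, hlt, hnm⟩ := Finset.mem_filter.1 hz3
    rw [hz2] at hlt hz4
    rw [Finset.mem_filter, Finset.mem_range]
    exact ⟨hlt, hnm, (Nat.modEq_iff_dvd' (by omega)).2 hz4⟩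
  case hj =>
    intro y hy
    obtain ⟨hy1, hy2, hy3⟩ := Finset.mem_filter.1 hy
    rw [Finset.mem_range] at hy1
    have hxsup : x ≤ E.sup id := Finset.le_sup (f := id) hxE
    refine Finset.mem_filter.2 ⟨Finset.mem_filter.2 ⟨Finset.mem_filter.2
      ⟨Finset.mem_product.2 ⟨hxE, Finset.mem_range.2 (by omega)⟩, hy1, hy2⟩, ?_⟩, rfl⟩
    exact (Nat.modEq_iff_dvd' (by omega)).1 hy3
  case li =>
    intro z hz
    obtain ⟨_, hz2⟩ := Finset.mem_filter.1 hz
    exact Prod.ext hz2.symm rfl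
  case ri =>
    intro y hy
    rfl

end hooks

lemma legendre (l : ℕ) (hl : l.Prime) (X T : ℕ) (hT : 0 < T) (h : X < l ^ T) :
    (X.factorial).factorization l = ∑ t ∈ Finset.Ico 1 T, X / l ^ t := by
  have hlog : Nat.log l X < T := by
    rcases Nat.eq_zero_or_pos X with rfl | hX
    · simpa using hT
    · exact Nat.log_lt_of_lt_pow (by omega) h
  have h1 := Nat.Prime.emultiplicity_factorial hl hlog
  have h2 := Nat.multiplicity_eq_factorization hl (Nat.factorial_ne_zero X)
  have h3 := multiplicity_eq_of_emultiplicity_eq_some h1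
  rw [← h2, h3]

lemma val_count (l : ℕ) (hl : l.Prime) (d T : ℕ) (hd : 0 < d) (h : d < l ^ T) :
    d.factorization l = ((Finset.Ico 1 T).filter (fun t => l ^ t ∣ d)).card := by
  have hlog : Nat.log l d < T := Nat.log_lt_of_lt_pow (by omega) h
  have h1 := Nat.emultiplicity_eq_card_pow_dvd hl.ne_one hd hlog
  have h2 := Nat.multiplicity_eq_factorization (n := d) hl (by omega)
  have h3 := multiplicity_eq_of_emultiplicity_eq_some h1
  rw [← h2, h3]

lemma val_hookProd (l : ℕ) (hl : l.Prime) (E : Finset ℕ) (T : ℕ)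
    (hbig : ∀ z ∈ pdiffs E, z.1 - z.2 < l ^ T) :
    (∏ z ∈ pdiffs E, (z.1 - z.2)).factorization l
      = ∑ t ∈ Finset.Ico 1 T, ∑ x ∈ E, gq (l ^ t) E x := by
  have hne : ∀ z ∈ pdiffs E, z.1 - z.2 ≠ 0 := fun z hz => (pdiffs_pos E z hz).ne'
  rw [Nat.factorization_prod hne, Finset.sum_apply']
  have h1 : ∀ z ∈ pdiffs E, (z.1 - z.2).factorization l
      = ∑ t ∈ Finset.Ico 1 T, (if l ^ t ∣ z.1 - z.2 then 1 else 0) := by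
    intro z hz
    rw [val_count l hl _ T (pdiffs_pos E z hz) (hbig z hz), Finset.card_filter]
  rw [Finset.sum_congr rfl h1, Finset.sum_comm]
  apply Finset.sum_congr rfl
  intro t _
  rw [← Finset.card_filter]
  exact pdiffs_count (l ^ t) (pow_pos hl.pos t) E


end St6

open St6

/-- Let `p` be a prime and `mu` a partition of `n` with `p`-core
`gam` (a partition of `m`) and weight `w`, so `n = m + wp`.  With
`p^a = [n!]_p` and `p^b = [(wp)!]_p`, the `p`-part of
`dim S^mu = n! / ∏ hooks(mu)` (hook length formula) satisfies
`[dim S^mu]_p ≥ p^{a-b}`, stated multiplicatively as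
`p^a ≤ [dim S^mu]_p · p^b`. -/
theorem stmt_6 (p : ℕ) (hp : p.Prime) (n k m w : ℕ) (mu gam : ℕ → ℕ)
    (hanti : ∀ i j, i ≤ j → mu j ≤ mu i)
    (hsupp : ∀ i, mu i ≠ 0 ↔ i < k)
    (hsumn : ∑ i ∈ Finset.range k, mu i = n)
    (hgam : IsPartitionFun gam)
    (hsumm : ∑ i ∈ Finset.range n, gam i = m)
    (hcore : IsPCoreWithWeight p mu gam w)
    (hn : n = m + w * p) :
    ppart p n.factorial
      ≤ ppart p (n.factorial / hookProd mu k) * ppart p ((w * p).factorial) := by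

  have hp2 := hp.two_le
  have hppos : 0 < p := by omega
  rcases Nat.eq_zero_or_pos k with hk0 | hk
  · -- degenerate case
    rw [hk0] at hsumn
    simp only [Finset.range_zero, Finset.sum_empty] at hsumn
    have hn0 : n = 0 := hsumn.symm
    have hw0 : w * p = 0 := by omega
    have hH : hookProd mu k = 1 := by
      rw [hk0, hookProd, cellsOf]
      simp
    rw [hn0, hw0, hH]
    simp [ppart, Nat.factorial_zero]
  · -- main case
    have hmu0 : ∀ i, k ≤ i → mu i = 0 := by
      intro i hi
      by_contra h
      have := (hsupp i).1 h
      omega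
    have hmupos : ∀ i, i < k → 1 ≤ mu i := by
      intro i hi
      have := (hsupp i).2 hi
      omega
    have hkn : k ≤ n := by
      calc k = ∑ _i ∈ Finset.range k, 1 := by simp
        _ ≤ ∑ i ∈ Finset.range k, mu i :=
            Finset.sum_le_sum (fun i hi => hmupos i (Finset.mem_range.1 hi))
        _ = n := hsumn
    have hnpos : 0 < n := by omega
    have hwpn : w * p ≤ n := by omega
    obtain ⟨hgdec, hg0, hcnt, hsumBC, hcl⟩ := chain p k hppos mu gam w hcore hanti hmu0
    have hsB : ∑ x ∈ Bset mu k, x = n + ∑ i ∈ Finset.range k, i := by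
      rw [sum_Bset mu k hanti, hsumn]
    have hmuin : ∀ i, i < k → mu i ≤ n := by
      intro i hi
      rw [← hsumn]
      exact Finset.single_le_sum (f := mu) (fun j _ => Nat.zero_le (mu j))
        (Finset.mem_range.2 hi)
    set T := 2 * n + 1 with hTdef
    have hdbound : ∀ z ∈ pdiffs (Bset mu k), z.1 - z.2 < T := by
      intro z hz
      obtain ⟨hzp, h1, h2⟩ := Finset.mem_filter.1 hz
      have hz1 : z.1 ∈ Bset mu k := (Finset.mem_product.1 hzp).1
      obtain ⟨i, hik, hxi⟩ := (mem_Bset mu k z.1).1 hz1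
      have := hmuin i hik
      omega
    have hTpow : ∀ l : ℕ, 2 ≤ l → T < l ^ T := by
      intro l hl
      calc T < 2 ^ T := Nat.lt_two_pow_self
        _ ≤ l ^ T := Nat.pow_le_pow_left hl T
    have hHp := hookProd_eq_pdiffs mu k hk hanti hsupp
    have hne : ∀ z ∈ pdiffs (Bset mu k), z.1 - z.2 ≠ 0 :=
      fun z hz => (pdiffs_pos _ z hz).ne'
    have hHpos : hookProd mu k ≠ 0 := by
      rw [hHp]
      exact Finset.prod_ne_zero_iff.2 hne
    have hval : ∀ l : ℕ, l.Prime → (hookProd mu k).factorization l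
        = ∑ t ∈ Finset.Ico 1 T, ∑ x ∈ Bset mu k, gq (l ^ t) (Bset mu k) x := by
      intro l hl
      rw [hHp]
      exact val_hookProd l hl (Bset mu k) T
        (fun z hz => lt_trans (hdbound z hz) (hTpow l hl.two_le))
    -- divisibility of the hook product in n!
    have hdvd : hookProd mu k ∣ n.factorial := by
      rw [← Nat.factorization_le_iff_dvd hHpos (Nat.factorial_ne_zero n)]
      rw [Finsupp.le_def]
      intro l
      by_cases hl : l.Prime
      · rw [hval l hl, legendre l hl n T (by omega)
          (lt_trans (by omega) (hTpow l hl.two_le))]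
        apply Finset.sum_le_sum
        intro t _
        have hq : 0 < l ^ t := pow_pos hl.pos t
        rw [Nat.le_div_iff_mul_le hq]
        have h6 := L6' (l ^ t) hq (Bset mu k)
        rw [card_Bset mu k hanti, hsB] at h6
        have hcm : (∑ x ∈ Bset mu k, gq (l ^ t) (Bset mu k) x) * l ^ t
            = l ^ t * (∑ x ∈ Bset mu k, gq (l ^ t) (Bset mu k) x) := Nat.mul_comm _ _
        omega
      · rw [Nat.factorization_eq_zero_of_not_prime _ hl]
        exact Nat.zero_le _
    -- main p-adic inequality
    have hmain : (hookProd mu k).factorization p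
        ≤ ((w * p).factorial).factorization p := by
      rw [hval p hp, legendre p hp (w * p) T (by omega)
        (lt_trans (by omega) (hTpow p hp.two_le))]
      apply Finset.sum_le_sum
      intro t ht
      have ht1 : 1 ≤ t := (Finset.mem_Ico.1 ht).1
      have hq : 0 < p ^ t := pow_pos hppos t
      have hpq : p ∣ p ^ t := dvd_pow_self p (by omega)
      have h6 := L6 p (p ^ t) w hppos hq hpq (Bset mu k) (Bset gam k) hcnt hcl hsumBC
      rw [Nat.le_div_iff_mul_le hq]
      calc (∑ x ∈ Bset mu k, gq (p ^ t) (Bset mu k) x) * p ^ t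
          = p ^ t * (∑ x ∈ Bset mu k, gq (p ^ t) (Bset mu k) x) := Nat.mul_comm _ _
        _ ≤ w * p := h6
    -- conclude
    have h1 : (n.factorial / hookProd mu k).factorization p
        = (n.factorial).factorization p - (hookProd mu k).factorization p := by
      rw [Nat.factorization_div hdvd, Finsupp.tsub_apply]
    have h2 : (hookProd mu k).factorization p ≤ (n.factorial).factorization p :=
      Finsupp.le_def.1 ((Nat.factorization_le_iff_dvd hHpos
        (Nat.factorial_ne_zero n)).2 hdvd) p
    rw [ppart, ppart, ppart, ← pow_add]
    apply Nat.pow_le_pow_right hppos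
    omega
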